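/- If X, Y, Z are mutually independent random variables with finite support on an abelian group G, then H(X) + H(Y + Z) ≤ H(X + Y) + H(X + Z). -/

import Mathlib

open MeasureTheory ProbabilityTheory Real
open Finset

lemma my_gibbs {ι : Type*} [Fintype ι] (f g : ι → ℝ) (hf : ∀ i, 0 ≤ f i)
    (hg : ∀ i, 0 ≤ g i) (h0 : ∀ i, g i = 0 → f i = 0)
    (hsum : ∑ i, g i ≤ ∑ i, f i) :
    ∑ i, f i * Real.log (g i) ≤ ∑ i, f i * Real.log (f i) := by
  have key : ∀ i, f i * Real.log (g i) ≤ f i * Real.log (f i) + (g i - f i) := by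
    intro i
    rcases eq_or_lt_of_le (hf i) with h | h
    · have : f i = 0 := h.symm
      simpa [this] using hg i
    · have hgpos : 0 < g i := lt_of_le_of_ne (hg i) (fun e => by
        have := h0 i e.symm; rw [this] at h; exact lt_irrefl _ h)
      have hlog := Real.log_le_sub_one_of_pos (div_pos hgpos h)
      rw [Real.log_div (ne_of_gt hgpos) (ne_of_gt h)] at hlog
      have h2 : f i * (g i / f i) = g i := by field_simp
      nlinarith [mul_le_mul_of_nonneg_left hlog (le_of_lt h)]
  calc ∑ i, f i * Real.log (g i)
      ≤ ∑ i, (f i * Real.log (f i) + (g i - f i)) := Finset.sum_le_sum (fun i _ => key i)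
    _ = ∑ i, f i * Real.log (f i) + (∑ i, g i - ∑ i, f i) := by
        rw [Finset.sum_add_distrib, Finset.sum_sub_distrib]
    _ ≤ ∑ i, f i * Real.log (f i) := by linarith

noncomputable def cnv {G : Type*} [Fintype G] [AddCommGroup G] (f g : G → ℝ) : G → ℝ :=
  fun u => ∑ x, f x * g (u - x)

section Cnv

variable {G : Type*} [Fintype G] [AddCommGroup G]

lemma cnv_apply (f g : G → ℝ) (u : G) : cnv f g u = ∑ x, f x * g (u - x) := rfl

lemma cnv_nonneg {f g : G → ℝ} (hf : ∀ x, 0 ≤ f x) (hg : ∀ x, 0 ≤ g x) (u : G) :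
    0 ≤ cnv f g u :=
  Finset.sum_nonneg fun x _ => mul_nonneg (hf x) (hg _)

lemma sum_shift (g : G → ℝ) (x : G) : ∑ u, g (u - x) = ∑ u, g u :=
  Fintype.sum_equiv (Equiv.subRight x) _ _ (fun _ => rfl)

lemma sum_cnv (f g : G → ℝ) : ∑ u, cnv f g u = (∑ x, f x) * (∑ y, g y) := by
  unfold cnv
  rw [Finset.sum_comm, Finset.sum_mul]
  refine Finset.sum_congr rfl fun x _ => ?_
  rw [← Finset.mul_sum, sum_shift]

lemma cnv_comm (f g : G → ℝ) : cnv f g = cnv g f := by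
  funext u
  refine Fintype.sum_equiv (Equiv.subLeft u) _ _ (fun x => ?_)
  simp only [Equiv.subLeft_apply, sub_sub_cancel]
  ring

lemma single_le_cnv {f g : G → ℝ} (hf : ∀ x, 0 ≤ f x) (hg : ∀ x, 0 ≤ g x)
    (x y : G) : f x * g y ≤ cnv f g (x + y) := by
  have h := Finset.single_le_sum (f := fun x' => f x' * g (x + y - x'))
    (fun x' _ => mul_nonneg (hf x') (hg _)) (Finset.mem_univ x)
  simpa [add_sub_cancel_left, cnv_apply] using h

lemma sum_cnv_eq (f g φ : G → ℝ) :
    ∑ x, ∑ y, f x * g y * φ (x + y) = ∑ u, cnv f g u * φ u := by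
  have h : ∀ x : G, ∑ y, f x * g y * φ (x + y) = ∑ u, f x * g (u - x) * φ u := by
    intro x
    refine Fintype.sum_equiv (Equiv.addLeft x) _ _ (fun y => ?_)
    simp [add_sub_cancel_left]
  rw [Finset.sum_congr rfl (fun x _ => h x), Finset.sum_comm]
  refine Finset.sum_congr rfl fun u _ => ?_
  rw [cnv_apply, Finset.sum_mul]

lemma cnv_assoc (f g h : G → ℝ) : cnv (cnv f g) h = cnv f (cnv g h) := by
  funext w
  have lhs : cnv (cnv f g) h w = ∑ u, ∑ x, f x * g (u - x) * h (w - u) := by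
    rw [cnv_apply]
    exact Finset.sum_congr rfl fun u _ => by rw [cnv_apply, Finset.sum_mul]
  have rhs : cnv f (cnv g h) w = ∑ x, ∑ m, f x * (g m * h (w - x - m)) := by
    rw [cnv_apply]
    exact Finset.sum_congr rfl fun x _ => by rw [cnv_apply, Finset.mul_sum]
  rw [lhs, rhs, Finset.sum_comm]
  refine Finset.sum_congr rfl fun x _ => ?_
  refine (Fintype.sum_equiv (Equiv.addLeft x)
    (fun m => f x * (g m * h (w - x - m))) (fun u => f x * g (u - x) * h (w - u))
    (fun m => ?_)).symm
  simp only [Equiv.coe_addLeft, add_sub_cancel_left]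
  rw [show w - (x + m) = w - x - m from by abel]
  ring

end Cnv

section Steps

variable {G : Type*} [Fintype G] [AddCommGroup G]

lemma stepA (p s : G → ℝ) (hp : ∀ x, 0 ≤ p x) (hs : ∀ x, 0 ≤ s x)
    (hp1 : ∑ x, p x = 1) (hs1 : ∑ x, s x = 1) :
    ∑ w, negMulLog (s w) ≤ ∑ w, negMulLog (cnv p s w) := by
  set t := cnv p s with ht
  have htsum : ∑ w, t w = 1 := by rw [ht, sum_cnv, hp1, hs1, mul_one]
  have htnn : ∀ w, 0 ≤ t w := cnv_nonneg hp hs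
  have expand : ∑ w, negMulLog (t w) = ∑ x, p x * (- ∑ w, s (w - x) * Real.log (t w)) := by
    calc ∑ w, negMulLog (t w) = ∑ w, - ∑ x, p x * s (w - x) * Real.log (t w) := by
          refine Finset.sum_congr rfl fun w _ => ?_
          rw [negMulLog, neg_mul, ← Finset.sum_mul]
          rfl
      _ = - ∑ w, ∑ x, p x * s (w - x) * Real.log (t w) := by rw [← Finset.sum_neg_distrib]
      _ = - ∑ x, ∑ w, p x * s (w - x) * Real.log (t w) := by rw [Finset.sum_comm]
      _ = ∑ x, p x * (- ∑ w, s (w - x) * Real.log (t w)) := by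
          rw [← Finset.sum_neg_distrib]
          refine Finset.sum_congr rfl fun x _ => ?_
          rw [mul_neg, neg_inj, Finset.mul_sum]
          exact Finset.sum_congr rfl fun w _ => mul_assoc _ _ _
  have hkey : ∀ x ∈ Finset.univ (α := G),
      p x * (∑ w, negMulLog (s w)) ≤ p x * (- ∑ w, s (w - x) * Real.log (t w)) := by
    intro x _
    rcases eq_or_lt_of_le (hp x) with h | h
    · rw [← h]; simp
    · refine mul_le_mul_of_nonneg_left ?_ (le_of_lt h)
      have h0 : ∀ w, t w = 0 → s (w - x) = 0 := by
        intro w hw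
        have h1 := single_le_cnv hp hs x (w - x)
        rw [add_sub_cancel] at h1
        rw [← ht, hw] at h1
        have h2 : 0 ≤ p x * s (w - x) := mul_nonneg (hp x) (hs _)
        have h3 : p x * s (w - x) = 0 := le_antisymm h1 h2
        rcases mul_eq_zero.mp h3 with h4 | h4
        · exact absurd h4 (ne_of_gt h)
        · exact h4
      have hsum : ∑ w, t w ≤ ∑ w, s (w - x) := by
        rw [htsum, sum_shift, hs1]
      have hgibbs := my_gibbs (fun w => s (w - x)) t (fun w => hs _) htnn h0 hsum
      have hshift : ∑ w, negMulLog (s w) = - ∑ w, s (w - x) * Real.log (s (w - x)) := by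
        rw [← sum_shift (fun w => negMulLog (s w)) x, ← Finset.sum_neg_distrib]
        exact Finset.sum_congr rfl fun w _ => by rw [negMulLog, neg_mul]
      rw [hshift]
      exact neg_le_neg hgibbs
  calc ∑ w, negMulLog (s w) = ∑ x, p x * ∑ w, negMulLog (s w) := by
        rw [← Finset.sum_mul, hp1, one_mul]
    _ ≤ ∑ x, p x * (- ∑ w, s (w - x) * Real.log (t w)) := Finset.sum_le_sum hkey
    _ = ∑ w, negMulLog (t w) := expand.symm

end Steps

section StepB

variable {G : Type*} [Fintype G] [AddCommGroup G]

def trip {G : Type*} [AddCommGroup G] : G × G × G ≃ G × G × G where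
  toFun i := (i.1 + i.2.1 + i.2.2, i.1 + i.2.1, i.1 + i.2.2)
  invFun j := (j.2.1 + j.2.2 - j.1, j.1 - j.2.2, j.1 - j.2.1)
  left_inv i := by
    obtain ⟨x, y, z⟩ := i
    simp only [Prod.mk.injEq]
    refine ⟨by abel, by abel, by abel⟩
  right_inv j := by
    obtain ⟨w, u, v⟩ := j
    simp only [Prod.mk.injEq]
    refine ⟨by abel, by abel, by abel⟩

lemma sum_weight_one {κ : Type*} [Fintype κ] (q : κ → ℝ) (hq1 : ∑ y, q y = 1) (c : ℝ) :
    ∑ y, q y * c = c := by rw [← Finset.sum_mul, hq1, one_mul]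

lemma neg_sum_mul_log {κ : Type*} [Fintype κ] (h : κ → ℝ) :
    ∑ w, negMulLog (h w) = - ∑ w, h w * Real.log (h w) := by
  rw [← Finset.sum_neg_distrib]
  exact Finset.sum_congr rfl fun w _ => by rw [negMulLog, neg_mul]

set_option maxHeartbeats 2000000 in
lemma stepB (p q r : G → ℝ) (hp : ∀ x, 0 ≤ p x) (hq : ∀ x, 0 ≤ q x) (hr : ∀ x, 0 ≤ r x)
    (hp1 : ∑ x, p x = 1) (hq1 : ∑ x, q x = 1) (hr1 : ∑ x, r x = 1) :
    ∑ x, negMulLog (p x) + ∑ w, negMulLog (cnv p (cnv q r) w) ≤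
      ∑ u, negMulLog (cnv p q u) + ∑ v, negMulLog (cnv p r v) := by
  classical
  set a := cnv p q with ha
  set b := cnv p r with hb
  set s := cnv q r with hs
  set t := cnv p s with htt
  have hann : ∀ u, 0 ≤ a u := cnv_nonneg hp hq
  have hbnn : ∀ u, 0 ≤ b u := cnv_nonneg hp hr
  have hsnn : ∀ u, 0 ≤ s u := cnv_nonneg hq hr
  have htnn : ∀ u, 0 ≤ t u := cnv_nonneg hp hsnn
  have hssum : ∑ w, s w = 1 := by rw [hs, sum_cnv, hq1, hr1, mul_one]
  have htsum : ∑ w, t w = 1 := by rw [htt, sum_cnv, hp1, hssum, mul_one]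
  set f : G × G × G → ℝ := fun i => p i.1 * q i.2.1 * r i.2.2 with hfdef
  set g : G × G × G → ℝ :=
    fun i => q i.2.1 * r i.2.2 * a (i.1 + i.2.1) * b (i.1 + i.2.2) /
      t (i.1 + i.2.1 + i.2.2) with hgdef
  -- positivity facts at points where f is nonzero
  have pos : ∀ x y z : G, p x * q y * r z ≠ 0 →
      0 < p x ∧ 0 < q y ∧ 0 < r z ∧ 0 < a (x + y) ∧ 0 < b (x + z) ∧ 0 < t (x + y + z) := by
    intro x y z hne
    have hx : p x ≠ 0 := fun e => hne (by rw [e, zero_mul, zero_mul])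
    have hy : q y ≠ 0 := fun e => hne (by rw [e, mul_zero, zero_mul])
    have hz : r z ≠ 0 := fun e => hne (by rw [e, mul_zero])
    have hpx : 0 < p x := lt_of_le_of_ne (hp x) (Ne.symm hx)
    have hqy : 0 < q y := lt_of_le_of_ne (hq y) (Ne.symm hy)
    have hrz : 0 < r z := lt_of_le_of_ne (hr z) (Ne.symm hz)
    have hA : 0 < a (x + y) := lt_of_lt_of_le (mul_pos hpx hqy) (single_le_cnv hp hq x y)
    have hB : 0 < b (x + z) := lt_of_lt_of_le (mul_pos hpx hrz) (single_le_cnv hp hr x z)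
    have hS : q y * r z ≤ s (y + z) := single_le_cnv hq hr y z
    have hT : p x * s (y + z) ≤ t (x + (y + z)) := single_le_cnv hp hsnn x (y + z)
    have hT' : 0 < t (x + y + z) := by
      rw [add_assoc]
      calc (0:ℝ) < p x * (q y * r z) := mul_pos hpx (mul_pos hqy hrz)
        _ ≤ p x * s (y + z) := by
            exact mul_le_mul_of_nonneg_left hS (le_of_lt hpx)
        _ ≤ t (x + (y + z)) := hT
    exact ⟨hpx, hqy, hrz, hA, hB, hT'⟩
  have hfnn : ∀ i, 0 ≤ f i := fun i => mul_nonneg (mul_nonneg (hp _) (hq _)) (hr _)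
  have hgnn : ∀ i, 0 ≤ g i := fun i =>
    div_nonneg (mul_nonneg (mul_nonneg (mul_nonneg (hq _) (hr _)) (hann _)) (hbnn _)) (htnn _)
  have h0 : ∀ i, g i = 0 → f i = 0 := by
    intro i hgi
    by_contra hfi
    obtain ⟨hpx, hqy, hrz, hA, hB, hT⟩ := pos i.1 i.2.1 i.2.2 hfi
    have : 0 < g i :=
      div_pos (mul_pos (mul_pos (mul_pos hqy hrz) hA) hB) hT
    rw [hgi] at this; exact lt_irrefl _ this
  -- ∑ f = 1
  have hsumf : ∑ i, f i = 1 := by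
    rw [hfdef]
    rw [Fintype.sum_prod_type]
    have h1 : ∀ x : G, ∑ i : G × G, p x * q i.1 * r i.2 = p x := by
      intro x
      rw [Fintype.sum_prod_type]
      have h2 : ∀ y : G, ∑ z, p x * q y * r z = p x * q y := by
        intro y
        calc ∑ z, p x * q y * r z = ∑ z, r z * (p x * q y) :=
              Finset.sum_congr rfl fun z _ => by ring
          _ = p x * q y := sum_weight_one r hr1 _
      calc ∑ y, ∑ z, p x * q y * r z = ∑ y, p x * q y := Finset.sum_congr rfl fun y _ => h2 y
        _ = ∑ y, q y * p x := Finset.sum_congr rfl fun y _ => by ring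
        _ = p x := sum_weight_one q hq1 _
    calc ∑ x, ∑ i : G × G, p x * q i.1 * r i.2 = ∑ x, p x :=
          Finset.sum_congr rfl fun x _ => h1 x
      _ = 1 := hp1
  -- ∑ g ≤ 1
  have hsumg : ∑ i, g i ≤ ∑ i, f i := by
    rw [hsumf]
    have e1 : ∑ i, g i =
        ∑ j : G × G × G, a j.2.1 * r (j.1 - j.2.1) * (b j.2.2 * q (j.1 - j.2.2)) / t j.1 := by
      refine Fintype.sum_equiv trip _ _ (fun i => ?_)
      obtain ⟨x, y, z⟩ := i
      show q y * r z * a (x + y) * b (x + z) / t (x + y + z) =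
        a (x + y) * r (x + y + z - (x + y)) * (b (x + z) * q (x + y + z - (x + z))) /
        t (x + y + z)
      rw [show x + y + z - (x + y) = z by abel, show x + y + z - (x + z) = y by abel]
      ring
    have cA : ∀ w, ∑ u, a u * r (w - u) = t w := by
      intro w
      have : ∑ u, a u * r (w - u) = cnv a r w := rfl
      rw [this, ha, cnv_assoc, ← hs, ← htt]
    have cB : ∀ w, ∑ v, b v * q (w - v) = t w := by
      intro w
      have : ∑ v, b v * q (w - v) = cnv b q w := rfl
      rw [this, hb, cnv_assoc, cnv_comm r q, ← hs, ← htt]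
    have e2 : ∑ j : G × G × G, a j.2.1 * r (j.1 - j.2.1) * (b j.2.2 * q (j.1 - j.2.2)) / t j.1 =
        ∑ w, t w * t w / t w := by
      rw [Fintype.sum_prod_type]
      refine Finset.sum_congr rfl fun w _ => ?_
      calc ∑ i : G × G, a i.1 * r (w - i.1) * (b i.2 * q (w - i.2)) / t w
          = (∑ i : G × G, a i.1 * r (w - i.1) * (b i.2 * q (w - i.2))) / t w := by
            rw [Finset.sum_div]
        _ = ((∑ u, a u * r (w - u)) * (∑ v, b v * q (w - v))) / t w := by
            congr 1
            rw [Fintype.sum_prod_type, Finset.sum_mul_sum]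
        _ = t w * t w / t w := by rw [cA w, cB w]
    rw [e1, e2]
    calc ∑ w, t w * t w / t w ≤ ∑ w, t w := by
          refine Finset.sum_le_sum fun w _ => ?_
          rcases eq_or_ne (t w) 0 with h | h
          · rw [h]; simp
          · rw [mul_div_assoc, div_self h, mul_one]
      _ = 1 := htsum
  -- Gibbs
  have hgibbs := my_gibbs f g hfnn hgnn h0 hsumg
  -- expand logs
  have I1 : ∑ i, f i * Real.log (f i) =
      ∑ i, f i * (Real.log (p i.1) + Real.log (q i.2.1) + Real.log (r i.2.2)) := by
    refine Finset.sum_congr rfl fun i _ => ?_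
    rcases eq_or_ne (f i) 0 with h | h
    · rw [h, zero_mul, zero_mul]
    · obtain ⟨hx, hy, hz, _, _, _⟩ := pos i.1 i.2.1 i.2.2 h
      have hfi : f i = p i.1 * q i.2.1 * r i.2.2 := rfl
      rw [hfi, Real.log_mul (mul_ne_zero (ne_of_gt hx) (ne_of_gt hy)) (ne_of_gt hz),
        Real.log_mul (ne_of_gt hx) (ne_of_gt hy)]
  have I2 : ∑ i, f i * Real.log (g i) =
      ∑ i, f i * (Real.log (q i.2.1) + Real.log (r i.2.2) + Real.log (a (i.1 + i.2.1)) +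
        Real.log (b (i.1 + i.2.2)) - Real.log (t (i.1 + i.2.1 + i.2.2))) := by
    refine Finset.sum_congr rfl fun i _ => ?_
    rcases eq_or_ne (f i) 0 with h | h
    · rw [h, zero_mul, zero_mul]
    · obtain ⟨hx, hy, hz, hA, hB, hT⟩ := pos i.1 i.2.1 i.2.2 h
      have hgi : g i = q i.2.1 * r i.2.2 * a (i.1 + i.2.1) * b (i.1 + i.2.2) /
          t (i.1 + i.2.1 + i.2.2) := rfl
      rw [hgi, Real.log_div (by positivity) (ne_of_gt hT),
        Real.log_mul (by positivity) (ne_of_gt hB),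
        Real.log_mul (by positivity) (ne_of_gt hA),
        Real.log_mul (ne_of_gt hy) (ne_of_gt hz)]
  -- marginal identities
  have MP : ∑ i : G × G × G, f i * Real.log (p i.1) = ∑ x, p x * Real.log (p x) := by
    rw [hfdef, Fintype.sum_prod_type]
    refine Finset.sum_congr rfl fun x _ => ?_
    rw [Fintype.sum_prod_type]
    have h2 : ∀ y : G, ∑ z, p x * q y * r z * Real.log (p x) = q y * (p x * Real.log (p x)) := by
      intro y
      calc ∑ z, p x * q y * r z * Real.log (p x)
          = ∑ z, r z * (p x * q y * Real.log (p x)) := Finset.sum_congr rfl fun z _ => by ring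
        _ = p x * q y * Real.log (p x) := sum_weight_one r hr1 _
        _ = q y * (p x * Real.log (p x)) := by ring
    calc ∑ y, ∑ z, p x * q y * r z * Real.log (p x)
        = ∑ y, q y * (p x * Real.log (p x)) := Finset.sum_congr rfl fun y _ => h2 y
      _ = p x * Real.log (p x) := sum_weight_one q hq1 _
  have MA : ∑ i : G × G × G, f i * Real.log (a (i.1 + i.2.1)) =
      ∑ u, a u * Real.log (a u) := by
    rw [hfdef, Fintype.sum_prod_type]
    have h1 : ∀ x : G, ∑ i : G × G, p x * q i.1 * r i.2 * Real.log (a (x + i.1)) =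
        ∑ y, p x * q y * Real.log (a (x + y)) := by
      intro x
      rw [Fintype.sum_prod_type]
      refine Finset.sum_congr rfl fun y _ => ?_
      calc ∑ z, p x * q y * r z * Real.log (a (x + y))
          = ∑ z, r z * (p x * q y * Real.log (a (x + y))) :=
            Finset.sum_congr rfl fun z _ => by ring
        _ = p x * q y * Real.log (a (x + y)) := sum_weight_one r hr1 _
    calc ∑ x, ∑ i : G × G, p x * q i.1 * r i.2 * Real.log (a (x + i.1))
        = ∑ x, ∑ y, p x * q y * Real.log (a (x + y)) := Finset.sum_congr rfl fun x _ => h1 x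
      _ = ∑ u, cnv p q u * Real.log (a u) := sum_cnv_eq p q (fun u => Real.log (a u))
      _ = ∑ u, a u * Real.log (a u) := by rw [← ha]
  have MB : ∑ i : G × G × G, f i * Real.log (b (i.1 + i.2.2)) =
      ∑ v, b v * Real.log (b v) := by
    rw [hfdef, Fintype.sum_prod_type]
    have h1 : ∀ x : G, ∑ i : G × G, p x * q i.1 * r i.2 * Real.log (b (x + i.2)) =
        ∑ z, p x * r z * Real.log (b (x + z)) := by
      intro x
      rw [Fintype.sum_prod_type, Finset.sum_comm]
      refine Finset.sum_congr rfl fun z _ => ?_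
      calc ∑ y, p x * q y * r z * Real.log (b (x + z))
          = ∑ y, q y * (p x * r z * Real.log (b (x + z))) :=
            Finset.sum_congr rfl fun y _ => by ring
        _ = p x * r z * Real.log (b (x + z)) := sum_weight_one q hq1 _
    calc ∑ x, ∑ i : G × G, p x * q i.1 * r i.2 * Real.log (b (x + i.2))
        = ∑ x, ∑ z, p x * r z * Real.log (b (x + z)) := Finset.sum_congr rfl fun x _ => h1 x
      _ = ∑ v, cnv p r v * Real.log (b v) := sum_cnv_eq p r (fun v => Real.log (b v))
      _ = ∑ v, b v * Real.log (b v) := by rw [← hb]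
  have MT : ∑ i : G × G × G, f i * Real.log (t (i.1 + i.2.1 + i.2.2)) =
      ∑ w, t w * Real.log (t w) := by
    rw [hfdef, Fintype.sum_prod_type]
    have h1 : ∀ x : G, ∑ i : G × G, p x * q i.1 * r i.2 * Real.log (t (x + i.1 + i.2)) =
        ∑ m, p x * s m * Real.log (t (x + m)) := by
      intro x
      rw [Fintype.sum_prod_type]
      have h2 : ∑ y, ∑ z, q y * r z * (p x * Real.log (t (x + (y + z)))) =
          ∑ m, cnv q r m * (p x * Real.log (t (x + m))) :=
        sum_cnv_eq q r (fun m => p x * Real.log (t (x + m)))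
      calc ∑ y, ∑ z, p x * q y * r z * Real.log (t (x + y + z))
          = ∑ y, ∑ z, q y * r z * (p x * Real.log (t (x + (y + z)))) := by
            refine Finset.sum_congr rfl fun y _ => Finset.sum_congr rfl fun z _ => ?_
            rw [← add_assoc]
            ring
        _ = ∑ m, cnv q r m * (p x * Real.log (t (x + m))) := h2
        _ = ∑ m, p x * s m * Real.log (t (x + m)) := by
            rw [← hs]
            exact Finset.sum_congr rfl fun m _ => by ring
    calc ∑ x, ∑ i : G × G, p x * q i.1 * r i.2 * Real.log (t (x + i.1 + i.2))
        = ∑ x, ∑ m, p x * s m * Real.log (t (x + m)) := Finset.sum_congr rfl fun x _ => h1 x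
      _ = ∑ w, cnv p s w * Real.log (t w) := sum_cnv_eq p s (fun w => Real.log (t w))
      _ = ∑ w, t w * Real.log (t w) := by rw [← htt]
  -- combine
  have hgibbs2 :
      ∑ i, f i * (Real.log (q i.2.1) + Real.log (r i.2.2) + Real.log (a (i.1 + i.2.1)) +
        Real.log (b (i.1 + i.2.2)) - Real.log (t (i.1 + i.2.1 + i.2.2))) ≤
      ∑ i, f i * (Real.log (p i.1) + Real.log (q i.2.1) + Real.log (r i.2.2)) := by
    rw [← I1, ← I2]; exact hgibbs
  simp only [mul_add, mul_sub, Finset.sum_add_distrib, Finset.sum_sub_distrib] at hgibbs2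
  rw [neg_sum_mul_log, neg_sum_mul_log, neg_sum_mul_log, neg_sum_mul_log]
  linarith [hgibbs2, MP, MA, MB, MT]

end StepB

section Bridge

variable {Ω G : Type*} [MeasurableSpace Ω] [AddCommGroup G] [Fintype G]
  [MeasurableSpace G] [MeasurableSingletonClass G]

lemma dist_sum_one (μ : Measure Ω) [IsProbabilityMeasure μ] (X : Ω → G) (hX : Measurable X) :
    ∑ x, (μ (X ⁻¹' {x})).toReal = 1 := by
  have h := sum_measure_preimage_singleton (μ := μ) (Finset.univ : Finset G)
    (fun y _ => hX (measurableSet_singleton y))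
  rw [Finset.coe_univ, Set.preimage_univ, measure_univ] at h
  rw [← ENNReal.toReal_sum (fun x _ => measure_ne_top μ _), h, ENNReal.toReal_one]

lemma dist_sum_eq (μ : Measure Ω) [IsProbabilityMeasure μ] (X Y : Ω → G)
    (hX : Measurable X) (hY : Measurable Y) (h : IndepFun X Y μ) (u : G) :
    (μ ((fun ω => X ω + Y ω) ⁻¹' {u})).toReal =
      ∑ x, (μ (X ⁻¹' {x})).toReal * (μ (Y ⁻¹' {u - x})).toReal := by
  classical
  have hset : (fun ω => X ω + Y ω) ⁻¹' {u} =
      ⋃ x ∈ (Finset.univ : Finset G), (X ⁻¹' {x} ∩ Y ⁻¹' {u - x}) := by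
    ext ω
    simp only [Set.mem_preimage, Set.mem_singleton_iff, Set.mem_iUnion, Set.mem_inter_iff,
      Finset.mem_univ, exists_true_left]
    constructor
    · intro h'
      exact ⟨X ω, rfl, by rw [← h']; abel⟩
    · rintro ⟨x, hx, hy⟩
      rw [hx, hy]
      abel
  have hdisj : (↑(Finset.univ : Finset G) : Set G).PairwiseDisjoint
      (fun x => X ⁻¹' {x} ∩ Y ⁻¹' {u - x}) := by
    intro x _ x' _ hne
    refine Set.disjoint_left.mpr ?_
    rintro ω ⟨hx, _⟩ ⟨hx', _⟩
    exact hne (by rw [← hx, ← hx'])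
  have hmeas : ∀ x ∈ (Finset.univ : Finset G), MeasurableSet (X ⁻¹' {x} ∩ Y ⁻¹' {u - x}) :=
    fun x _ => (hX (measurableSet_singleton x)).inter (hY (measurableSet_singleton _))
  rw [hset, measure_biUnion_finset hdisj hmeas]
  rw [ENNReal.toReal_sum (fun x _ => measure_ne_top μ _)]
  refine Finset.sum_congr rfl fun x _ => ?_
  rw [indepFun_iff_measure_inter_preimage_eq_mul.mp h {x} {u - x}
    (measurableSet_singleton _) (measurableSet_singleton _), ENNReal.toReal_mul]

end Bridge

/-- Shannon entropy (natural log) of a finitely-valued random variable. -/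
noncomputable def ent {Ω S : Type*} [MeasurableSpace Ω] [Fintype S]
    (μ : Measure Ω) (X : Ω → S) : ℝ :=
  ∑ s : S, Real.negMulLog ((μ (X ⁻¹' {s})).toReal)

theorem stmt6 {Ω G : Type*} [MeasurableSpace Ω] [AddCommGroup G] [Fintype G]
    [MeasurableSpace G] [MeasurableSingletonClass G]
    (μ : Measure Ω) [IsProbabilityMeasure μ]
    (X Y Z : Ω → G) (hX : Measurable X) (hY : Measurable Y) (hZ : Measurable Z)
    (hind : iIndepFun ![X, Y, Z] μ) :
    ent μ X + ent μ (fun ω => Y ω + Z ω) ≤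
      ent μ (fun ω => X ω + Y ω) + ent μ (fun ω => X ω + Z ω) := by
  classical
  set p : G → ℝ := fun x => (μ (X ⁻¹' {x})).toReal with hpdef
  set q : G → ℝ := fun x => (μ (Y ⁻¹' {x})).toReal with hqdef
  set r : G → ℝ := fun x => (μ (Z ⁻¹' {x})).toReal with hrdef
  have hXY : IndepFun X Y μ := by
    have := hind.indepFun (show (0 : Fin 3) ≠ 1 by decide)
    simpa using this
  have hXZ : IndepFun X Z μ := by
    have := hind.indepFun (show (0 : Fin 3) ≠ 2 by decide)
    simpa using this
  have hYZ : IndepFun Y Z μ := by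
    have := hind.indepFun (show (1 : Fin 3) ≠ 2 by decide)
    simpa using this
  have hp : ∀ x, 0 ≤ p x := fun x => ENNReal.toReal_nonneg
  have hq : ∀ x, 0 ≤ q x := fun x => ENNReal.toReal_nonneg
  have hr : ∀ x, 0 ≤ r x := fun x => ENNReal.toReal_nonneg
  have hp1 : ∑ x, p x = 1 := dist_sum_one μ X hX
  have hq1 : ∑ x, q x = 1 := dist_sum_one μ Y hY
  have hr1 : ∑ x, r x = 1 := dist_sum_one μ Z hZ
  have eYZ : ent μ (fun ω => Y ω + Z ω) = ∑ w, Real.negMulLog (cnv q r w) := by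
    unfold ent
    exact Finset.sum_congr rfl fun w _ => by rw [dist_sum_eq μ Y Z hY hZ hYZ w]; rfl
  have eXY : ent μ (fun ω => X ω + Y ω) = ∑ u, Real.negMulLog (cnv p q u) := by
    unfold ent
    exact Finset.sum_congr rfl fun u _ => by rw [dist_sum_eq μ X Y hX hY hXY u]; rfl
  have eXZ : ent μ (fun ω => X ω + Z ω) = ∑ v, Real.negMulLog (cnv p r v) := by
    unfold ent
    exact Finset.sum_congr rfl fun v _ => by rw [dist_sum_eq μ X Z hX hZ hXZ v]; rfl
  have eX : ent μ X = ∑ x, Real.negMulLog (p x) := rfl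
  rw [eX, eYZ, eXY, eXZ]
  have hs1 : ∑ w, cnv q r w = 1 := by rw [sum_cnv, hq1, hr1, mul_one]
  have hA := stepA p (cnv q r) hp (cnv_nonneg hq hr) hp1 hs1
  have hB := stepB p q r hp hq hr hp1 hq1 hr1
  linarith
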